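/- Let (X,ρ) be a metric space, let A ∈ CL(X) and let (A_k) be a sequence in CL(X). Suppose f : [0,∞) → [0,∞) is an unbounded modulus such that lim_{t→∞} f(t)/t > 0 and there is a constant c ∈ (0,∞) with f(xy) ≥ c·f(x)·f(y) for all x, y ∈ [0,∞). If (A_k) is Wijsman strongly Cesàro summable to A with respect to f, then (A_k) is f-Wijsman statistically convergent to A. -/

import Mathlib

open Filter Metric Set
open scoped Classical

/-- A modulus: `f : [0,∞) → [0,∞)` with `f x = 0 ↔ x = 0`, subadditive,
increasing, and continuous (all on `[0,∞)`). -/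
def IsModulus (f : ℝ → ℝ) : Prop :=
  (∀ x : ℝ, 0 ≤ x → 0 ≤ f x) ∧
  (∀ x : ℝ, 0 ≤ x → (f x = 0 ↔ x = 0)) ∧
  (∀ x y : ℝ, 0 ≤ x → 0 ≤ y → f (x + y) ≤ f x + f y) ∧
  MonotoneOn f (Set.Ici 0) ∧
  ContinuousOn f (Set.Ici 0)

/-- `f` is unbounded on `[0,∞)`. -/
def IsUnboundedOn (f : ℝ → ℝ) : Prop := ∀ M : ℝ, ∃ x : ℝ, 0 ≤ x ∧ M < f x

/-- The number of elements `k ≤ n` with `k ∈ K`. -/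
noncomputable def countLe (K : Set ℕ) (n : ℕ) : ℕ := Nat.card {k : ℕ | k ≤ n ∧ k ∈ K}

/-- `K ⊆ ℕ` has `f`-density `d`: `lim_n f(|{k ≤ n : k ∈ K}|)/f(n) = d`. -/
def HasFDensity (f : ℝ → ℝ) (K : Set ℕ) (d : ℝ) : Prop :=
  Tendsto (fun n : ℕ => f (countLe K n : ℝ) / f (n : ℝ)) atTop (nhds d)

/-- `K ⊆ ℕ` has natural density `d`: `lim_n |{k ≤ n : k ∈ K}|/n = d`. -/
def HasNatDensity (K : Set ℕ) (d : ℝ) : Prop :=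
  Tendsto (fun n : ℕ => (countLe K n : ℝ) / (n : ℝ)) atTop (nhds d)

/-- Wijsman convergence: `d(x, A_k) → d(x, A)` for every `x`. -/
def WijsmanConvTo {X : Type*} [MetricSpace X] (Aseq : ℕ → Set X) (A : Set X) : Prop :=
  ∀ x : X, Tendsto (fun k : ℕ => infDist x (Aseq k)) atTop (nhds (infDist x A))

/-- Wijsman statistical convergence (with respect to the natural density). -/
def WijsmanStatConvTo {X : Type*} [MetricSpace X] (Aseq : ℕ → Set X) (A : Set X) : Prop :=
  ∀ x : X, ∀ ε : ℝ, 0 < ε →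
    HasNatDensity {k : ℕ | ε ≤ |infDist x (Aseq k) - infDist x A|} 0

/-- `f`-Wijsman statistical convergence: `[WS^f]-lim A_k = A`. -/
def FWijsmanStatConvTo (f : ℝ → ℝ) {X : Type*} [MetricSpace X]
    (Aseq : ℕ → Set X) (A : Set X) : Prop :=
  ∀ x : X, ∀ ε : ℝ, 0 < ε →
    HasFDensity f {k : ℕ | ε ≤ |infDist x (Aseq k) - infDist x A|} 0

/-- Wijsman boundedness: `sup_k d(x, A_k) < ∞` for every `x`. -/
def WijsmanBounded {X : Type*} [MetricSpace X] (Aseq : ℕ → Set X) : Prop :=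
  ∀ x : X, ∃ M : ℝ, ∀ k : ℕ, infDist x (Aseq k) ≤ M

/-- Wijsman Cesàro summability to `A`. -/
def WijsmanCesaroTo {X : Type*} [MetricSpace X] (Aseq : ℕ → Set X) (A : Set X) : Prop :=
  ∀ x : X, Tendsto (fun n : ℕ => (∑ k ∈ Finset.range n, infDist x (Aseq k)) / (n : ℝ))
    atTop (nhds (infDist x A))

/-- Wijsman strong Cesàro summability to `A` with respect to a modulus `f`:
`[Ww^f]-lim A_k = A`. -/
def WijsmanStrongCesaroTo (f : ℝ → ℝ) {X : Type*} [MetricSpace X]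
    (Aseq : ℕ → Set X) (A : Set X) : Prop :=
  ∀ x : X, Tendsto
    (fun n : ℕ => (∑ k ∈ Finset.range n, f |infDist x (Aseq k) - infDist x A|) / (n : ℝ))
    atTop (nhds 0)

/-- A slowly varying modulus: `lim_{x→∞} f(ax)/f(x) = 1` for every `a > 0`. -/
def SlowlyVaryingOn (f : ℝ → ℝ) : Prop :=
  ∀ a : ℝ, 0 < a → Tendsto (fun x : ℝ => f (a * x) / f x) atTop (nhds 1)

lemma countLe_eq' (K : Set ℕ) (n : ℕ) :
    countLe K n = ((Finset.range (n+1)).filter (fun k => k ∈ K)).card := by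
  have hset : {k : ℕ | k ≤ n ∧ k ∈ K}
      = ↑((Finset.range (n+1)).filter (fun k => k ∈ K)) := by
    ext k; simp [Nat.lt_succ_iff]
  rw [countLe, Nat.card_coe_set_eq, hset, Set.ncard_coe_finset]

/-- Let `f` be an unbounded modulus with `lim_{t→∞} f(t)/t > 0` and
`f(xy) ≥ c f(x) f(y)` for some `c > 0` and all `x, y ≥ 0`. Then Wijsman strong
Cesàro summability w.r.t. `f` implies `f`-Wijsman statistical convergence. -/
theorem stmt11 {X : Type*} [MetricSpace X]
    (A : Set X) (hA : A.Nonempty) (hAcl : IsClosed A)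
    (Aseq : ℕ → Set X) (hAseq : ∀ k, (Aseq k).Nonempty ∧ IsClosed (Aseq k))
    (f : ℝ → ℝ) (hf : IsModulus f) (hfu : IsUnboundedOn f)
    (hβ : ∃ β : ℝ, 0 < β ∧ Tendsto (fun t : ℝ => f t / t) atTop (nhds β))
    (c : ℝ) (hc : 0 < c)
    (hmul : ∀ x y : ℝ, 0 ≤ x → 0 ≤ y → c * (f x * f y) ≤ f (x * y))
    (h : WijsmanStrongCesaroTo f Aseq A) :
    FWijsmanStatConvTo f Aseq A := by
  obtain ⟨hf0, hfz, hadd, hmono, hcont⟩ := hf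
  intro x ε hε
  set g : ℕ → ℝ := fun k => |infDist x (Aseq k) - infDist x A| with hg
  have hg0 : ∀ k, 0 ≤ g k := fun k => abs_nonneg _
  set K : Set ℕ := {k : ℕ | ε ≤ g k} with hK
  have hfε : 0 < f ε := by
    rcases lt_or_eq_of_le (hf0 ε hε.le) with h' | h'
    · exact h'
    · exact absurd ((hfz ε hε.le).mp h'.symm) (ne_of_gt hε)
  set F : ℕ → Finset ℕ := fun n => (Finset.range n).filter (fun k => k ∈ K) with hF
  -- count bound
  have hcount_le : ∀ n : ℕ, (countLe K n : ℝ) ≤ (F n).card + 1 := by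
    intro n
    have h1 : countLe K n ≤ (F n).card + 1 := by
      rw [countLe_eq']
      have hsub : (Finset.range (n+1)).filter (fun k => k ∈ K)
          ⊆ insert n (F n) := by
        intro k hk
        simp only [Finset.mem_filter, Finset.mem_range, Nat.lt_succ_iff] at hk
        rcases lt_or_eq_of_le hk.1 with h' | h'
        · exact Finset.mem_insert_of_mem (Finset.mem_filter.mpr ⟨Finset.mem_range.mpr h', hk.2⟩)
        · simp [h']
      exact le_trans (Finset.card_le_card hsub) (Finset.card_insert_le _ _)
    exact_mod_cast h1
  -- sum bound
  have hsum_bound : ∀ n : ℕ, f ε * (F n).card ≤ ∑ k ∈ Finset.range n, f (g k) := by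
    intro n
    calc f ε * (F n).card = ∑ _k ∈ F n, f ε := by
          rw [Finset.sum_const, nsmul_eq_mul, mul_comm]
      _ ≤ ∑ k ∈ F n, f (g k) := by
          refine Finset.sum_le_sum fun k hk => ?_
          have hkK : ε ≤ g k := (Finset.mem_filter.mp hk).2
          exact hmono (mem_Ici.mpr hε.le) (mem_Ici.mpr (hg0 k)) hkK
      _ ≤ ∑ k ∈ Finset.range n, f (g k) := by
          refine Finset.sum_le_sum_of_subset_of_nonneg (Finset.filter_subset _ _)
            fun k _ _ => hf0 _ (hg0 k)
  -- natural density zero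
  have hS := h x
  have hcount : Tendsto (fun n : ℕ => (countLe K n : ℝ) / n) atTop (nhds 0) := by
    have hbound : Tendsto
        (fun n : ℕ => ((∑ k ∈ Finset.range n, f (g k)) / n) / f ε + 1 / n)
        atTop (nhds 0) := by
      have h1 := hS.div_const (f ε)
      have h2 : Tendsto (fun n : ℕ => 1 / (n : ℝ)) atTop (nhds 0) := tendsto_one_div_atTop_nhds_zero_nat
      have := h1.add h2
      simpa using this
    refine squeeze_zero' ?_ ?_ hbound
    · filter_upwards with n
      positivity
    · filter_upwards [eventually_ge_atTop 1] with n hn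
      have hn0 : (0:ℝ) < n := by exact_mod_cast hn
      have hFc : ((F n).card : ℝ) ≤ (∑ k ∈ Finset.range n, f (g k)) / f ε :=
        (le_div_iff₀ hfε).mpr (by linarith [hsum_bound n, mul_comm (f ε) ((F n).card : ℝ)])
      have : (countLe K n : ℝ) ≤ (∑ k ∈ Finset.range n, f (g k)) / f ε + 1 :=
        le_trans (hcount_le n) (by linarith)
      calc (countLe K n : ℝ) / n ≤ ((∑ k ∈ Finset.range n, f (g k)) / f ε + 1) / n :=
            div_le_div_of_nonneg_right this hn0.le |>.trans_eq rfl
        _ = ((∑ k ∈ Finset.range n, f (g k)) / n) / f ε + 1 / n := by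
            field_simp
  -- f-density zero
  rw [HasFDensity, Metric.tendsto_atTop]
  intro δ hδ
  obtain ⟨T₀, hT₀0, hT₀⟩ := hfu (1 / (c * δ))
  set T : ℝ := max T₀ 1 with hT
  have hT1 : (1:ℝ) ≤ T := le_max_right _ _
  have hTpos : 0 < T := lt_of_lt_of_le one_pos hT1
  have hfT : 1 / (c * δ) < f T :=
    lt_of_lt_of_le hT₀ (hmono (mem_Ici.mpr hT₀0) (mem_Ici.mpr hTpos.le) (le_max_left _ _))
  have hfTpos : 0 < f T := lt_of_le_of_lt (by positivity) hfT
  have hev : ∀ᶠ n : ℕ in atTop, (countLe K n : ℝ) / n < 1 / T :=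
    hcount.eventually (gt_mem_nhds (by positivity))
  rw [eventually_atTop] at hev
  obtain ⟨N, hN⟩ := hev
  refine ⟨max N 1, fun n hn => ?_⟩
  have hnN : N ≤ n := le_trans (le_max_left _ _) hn
  have hn1 : 1 ≤ n := le_trans (le_max_right _ _) hn
  have hn0 : (0:ℝ) < n := by exact_mod_cast hn1
  rw [Real.dist_eq, sub_zero]
  by_cases hc0 : countLe K n = 0
  · rw [hc0]
    simp only [Nat.cast_zero]
    rw [(hfz 0 le_rfl).mpr rfl, zero_div, abs_zero]
    exact hδ
  · have hcpos : (0:ℝ) < countLe K n := by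
      exact_mod_cast Nat.pos_of_ne_zero hc0
    have hfcpos : 0 < f (countLe K n) := by
      rcases lt_or_eq_of_le (hf0 _ hcpos.le) with h' | h'
      · exact h'
      · exact absurd ((hfz _ hcpos.le).mp h'.symm) (ne_of_gt hcpos)
    have hratio : (countLe K n : ℝ) / n < 1 / T := hN n hnN
    have hTle : T < n / (countLe K n : ℝ) := by
      rw [lt_div_iff₀ hcpos]
      rw [div_lt_div_iff₀ hn0 hTpos] at hratio
      nlinarith
    have hquot0 : (0:ℝ) ≤ n / (countLe K n : ℝ) := by positivity
    have hfq : f T ≤ f (n / (countLe K n : ℝ)) :=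
      hmono (mem_Ici.mpr hTpos.le) (mem_Ici.mpr hquot0) hTle.le
    have hfqpos : 0 < f (n / (countLe K n : ℝ)) := lt_of_lt_of_le hfTpos hfq
    have hfn : c * (f (n / (countLe K n : ℝ)) * f (countLe K n)) ≤ f n := by
      have := hmul (n / (countLe K n : ℝ)) (countLe K n) hquot0 hcpos.le
      rwa [div_mul_cancel₀ _ (ne_of_gt hcpos)] at this
    have hfnpos : 0 < f n := lt_of_lt_of_le (by positivity) hfn
    have key : f (countLe K n) / f n ≤ 1 / (c * f T) := by
      rw [div_le_div_iff₀ hfnpos (by positivity)]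
      calc f (countLe K n) * (c * f T)
          ≤ f (countLe K n) * (c * f (n / (countLe K n : ℝ))) := by
            apply mul_le_mul_of_nonneg_left _ hfcpos.le
            exact mul_le_mul_of_nonneg_left hfq hc.le
        _ = c * (f (n / (countLe K n : ℝ)) * f (countLe K n)) := by ring
        _ ≤ f n := hfn
        _ = 1 * f n := (one_mul _).symm
    have hlt : 1 / (c * f T) < δ := by
      rw [div_lt_iff₀ (by positivity)]
      rw [div_lt_iff₀ (by positivity)] at hfT
      nlinarith
    rw [abs_of_nonneg (by positivity)]
    exact lt_of_le_of_lt key hlt
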